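/- For every integer n ≥ 0 and every x, (2n+1) · P_{2n}(x) = Q_{2n+1}(x) + Σ_{i=0}^{n-1} C(2n+1, 2i+2) (-1)^{i+2} (4^{i+1} − 2) B_{2i+2} Q_{2n-2i-1}(x), where C(m,j) denotes the binomial coefficient and B_j denotes the j-th Bernoulli number. -/

import Mathlib

open Polynomial Finset

/-- The derivative polynomials for tangent: `P 0 = X`,
`P (n+1) = (1 + X^2) * (P n)'`. -/
noncomputable def P : ℕ → Polynomial ℚ
  | 0 => X
  | n + 1 => (1 + X ^ 2) * derivative (P n)

/-- The derivative polynomials for secant: `Q 0 = 1`,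
`Q (n+1) = (1 + X^2) * (Q n)' + X * Q n`. -/
noncomputable def Q : ℕ → Polynomial ℚ
  | 0 => 1
  | n + 1 => (1 + X ^ 2) * derivative (Q n) + X * Q n

lemma sum_range_even_odd {M : Type*} [AddCommMonoid M] (f : ℕ → M) (n : ℕ) :
    ∑ m ∈ range (2 * n), f m = ∑ j ∈ range n, (f (2 * j) + f (2 * j + 1)) := by
  induction n with
  | zero => simp
  | succ n ih =>
    have h : 2 * (n + 1) = (2 * n + 1) + 1 := by ring
    rw [h, sum_range_succ, sum_range_succ, ih, sum_range_succ, add_assoc]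

lemma sum_tri {M : Type*} [AddCommMonoid M] (n : ℕ) (f : ℕ → ℕ → M) :
    ∑ m ∈ range (n + 1), ∑ j ∈ range (n + 1 - m), f m j
      = ∑ l ∈ range (n + 1), ∑ m ∈ range (l + 1), f m (l - m) := by
  induction n with
  | zero => simp
  | succ n ih =>
    rw [sum_range_succ (fun m => ∑ j ∈ range (n + 2 - m), f m j),
      sum_range_succ (fun l => ∑ m ∈ range (l + 1), f m (l - m)), ← ih]
    have h1 : ∀ m ∈ range (n + 1), ∑ j ∈ range (n + 2 - m), f m j
        = ∑ j ∈ range (n + 1 - m), f m j + f m (n + 1 - m) := by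
      intro m hm
      rw [mem_range] at hm
      have : n + 2 - m = (n + 1 - m) + 1 := by omega
      rw [this, sum_range_succ]
    rw [sum_congr rfl h1, sum_add_distrib]
    have h2 : n + 2 - (n + 1) = 1 := by omega
    rw [h2, sum_range_one, sum_range_succ (fun m => f m (n + 1 - m)) (n + 1), add_assoc, Nat.sub_self]

def sc : ℕ → ℚ × ℚ
  | 0 => (0, 1)
  | n + 1 => ((sc n).2, -(sc n).1)

@[simp] lemma sc_s_zero : (sc 0).1 = 0 := rfl
@[simp] lemma sc_c_zero : (sc 0).2 = 1 := rfl
@[simp] lemma sc_s_succ (n : ℕ) : (sc (n + 1)).1 = (sc n).2 := rfl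
@[simp] lemma sc_c_succ (n : ℕ) : (sc (n + 1)).2 = -(sc n).1 := rfl

lemma sc_even (j : ℕ) : (sc (2 * j)).1 = 0 ∧ (sc (2 * j)).2 = (-1) ^ j := by
  induction j with
  | zero => simp
  | succ j ih =>
    have h : 2 * (j + 1) = (2 * j + 1) + 1 := by ring
    rw [h]
    simp [ih.1, ih.2, pow_succ]

lemma sc_s_odd (j : ℕ) : (sc (2 * j + 1)).1 = (-1) ^ j := by
  rw [sc_s_succ, (sc_even j).2]

lemma sc_c_odd (j : ℕ) : (sc (2 * j + 1)).2 = 0 := by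
  rw [sc_c_succ, (sc_even j).1, neg_zero]

lemma P_succ (n : ℕ) : P (n + 1) = (1 + X ^ 2) * derivative (P n) := rfl
lemma Q_succ (n : ℕ) : Q (n + 1) = (1 + X ^ 2) * derivative (Q n) + X * Q n := rfl

lemma QP_pair (n : ℕ) :
    (Q n = C ((sc n).2) + ∑ k ∈ range (n + 1), C ((n.choose k : ℚ) * (sc k).1) * P (n - k)) ∧
    ((X : ℚ[X]) * Q n
      = C (-((sc n).1)) + ∑ k ∈ range (n + 1), C ((n.choose k : ℚ) * (sc k).2) * P (n - k)) := by
  induction n with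
  | zero =>
    constructor
    · show (1 : ℚ[X]) = _
      simp [P]
    · show (X : ℚ[X]) * 1 = _
      simp [P]
  | succ n ih =>
    obtain ⟨hS, hT⟩ := ih
    have fact : ∀ (g : ℕ → ℚ) (b : ℚ) (A : ℚ[X]),
        A = C b + ∑ k ∈ range (n + 1), C ((n.choose k : ℚ) * g k) * P (n - k) →
        (1 + X ^ 2) * derivative A
          = ∑ k ∈ range (n + 1), C ((n.choose k : ℚ) * g k) * P (n - k + 1) := by
      intro g b A hA
      rw [hA, derivative_add, derivative_C, zero_add, derivative_sum, mul_sum]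
      refine sum_congr rfl fun k hk => ?_
      rw [derivative_C_mul, P_succ]
      ring
    have h1 := fact (fun k => (sc k).1) ((sc n).2) (Q n) hS
    have h2 := fact (fun k => (sc k).2) (-((sc n).1)) ((X : ℚ[X]) * Q n) hT
    -- the shifted-sum identities
    have shift : ∀ g : ℕ → ℚ, g 0 = 0 →
        (∑ j ∈ range (n + 1), C ((n.choose (j + 1) : ℚ) * g (j + 1)) * P (n - j))
          = ∑ k ∈ range (n + 1), C ((n.choose k : ℚ) * g k) * P (n - k + 1) := by
      intro g hg0
      rw [sum_range_succ, Nat.choose_succ_self, sum_range_succ' _ n]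
      simp only [Nat.cast_zero, zero_mul, map_zero, zero_mul, add_zero, hg0, mul_zero,
        Nat.choose_zero_right]
      refine sum_congr rfl fun i hi => ?_
      rw [mem_range] at hi
      have : n - (i + 1) + 1 = n - i := by omega
      rw [this]
    constructor
    · -- S (n+1)
      have hsum : ∑ k ∈ range (n + 1 + 1), C (((n + 1).choose k : ℚ) * (sc k).1) * P (n + 1 - k)
          = (∑ k ∈ range (n + 1), C ((n.choose k : ℚ) * (sc k).1) * P (n - k + 1))
            + ∑ k ∈ range (n + 1), C ((n.choose k : ℚ) * (sc k).2) * P (n - k) := by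
        rw [sum_range_succ' _ (n + 1)]
        simp only [sc_s_zero, mul_zero, map_zero, zero_mul, add_zero, Nat.succ_sub_succ,
          Nat.sub_zero]
        have step : ∀ j ∈ range (n + 1),
            C (((n + 1).choose (j + 1) : ℚ) * (sc (j + 1)).1) * P (n - j)
              = C ((n.choose (j + 1) : ℚ) * (sc (j + 1)).1) * P (n - j)
                + C ((n.choose j : ℚ) * (sc j).2) * P (n - j) := by
          intro j hj
          rw [Nat.choose_succ_succ', Nat.cast_add, add_mul, map_add, add_mul, sc_s_succ]
          ring
        rw [sum_congr rfl step, sum_add_distrib, shift (fun k => (sc k).1) sc_s_zero]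
      rw [Q_succ, h1, hT, hsum, sc_c_succ, map_neg]
      ring
    · -- T (n+1)
      have factT : (X : ℚ[X]) * Q (n + 1) = (1 + X ^ 2) * derivative (X * Q n) - Q n := by
        rw [Q_succ, derivative_mul, derivative_X]
        ring
      have hsum : ∑ k ∈ range (n + 1 + 1), C (((n + 1).choose k : ℚ) * (sc k).2) * P (n + 1 - k)
          = (∑ k ∈ range (n + 1), C ((n.choose k : ℚ) * (sc k).2) * P (n - k + 1))
            - ∑ k ∈ range (n + 1), C ((n.choose k : ℚ) * (sc k).1) * P (n - k) := by
        rw [sum_range_succ' _ (n + 1)]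
        simp only [sc_c_zero, mul_one, Nat.choose_zero_right, Nat.cast_one, map_one, one_mul,
          Nat.succ_sub_succ]
        have step : ∀ j ∈ range (n + 1),
            C (((n + 1).choose (j + 1) : ℚ) * (sc (j + 1)).2) * P (n - j)
              = C ((n.choose (j + 1) : ℚ) * (sc (j + 1)).2) * P (n - j)
                + (- (C ((n.choose j : ℚ) * (sc j).1) * P (n - j))) := by
          intro j hj
          rw [Nat.choose_succ_succ', Nat.cast_add, add_mul, map_add, add_mul, sc_c_succ]
          simp only [mul_neg, map_neg, neg_mul]
          ring
        rw [sum_congr rfl step, sum_add_distrib, sum_neg_distrib]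
        have hc : (∑ j ∈ range (n + 1), C ((n.choose (j + 1) : ℚ) * (sc (j + 1)).2) * P (n - j))
              + P (n + 1)
            = ∑ k ∈ range (n + 1), C ((n.choose k : ℚ) * (sc k).2) * P (n - k + 1) := by
          rw [sum_range_succ, Nat.choose_succ_self, sum_range_succ' _ n]
          simp only [Nat.cast_zero, zero_mul, map_zero, add_zero, Nat.choose_zero_right,
            Nat.cast_one, sc_c_zero, mul_one, map_one, one_mul]
          congr 1
          refine sum_congr rfl fun i hi => ?_
          rw [mem_range] at hi
          have : n - (i + 1) + 1 = n - i := by omega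
          rw [this]
        rw [← hc]
        simp only [Nat.sub_zero]
        ring
      have hQn : ∑ k ∈ range (n + 1), C ((n.choose k : ℚ) * (sc k).1) * P (n - k)
          = Q n - C ((sc n).2) := by rw [hS]; ring
      rw [factT, h2, hsum, hQn, sc_s_succ, map_neg]
      ring

lemma Q_odd_eval (k : ℕ) (x : ℚ) :
    (Q (2 * k + 1)).eval x
      = ∑ j ∈ range (k + 1), ((2 * k + 1).choose (2 * j + 1) : ℚ) * (-1) ^ j
          * (P (2 * (k - j))).eval x := by
  have h := (QP_pair (2 * k + 1)).1
  rw [sc_c_odd, map_zero, zero_add] at h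
  have h2 : 2 * k + 1 + 1 = 2 * (k + 1) := by ring
  rw [h2] at h
  rw [h, eval_finset_sum, sum_range_even_odd
    (fun m => ((C (((2 * k + 1).choose m : ℚ) * (sc m).1) * P (2 * k + 1 - m)).eval x)) (k + 1)]
  refine sum_congr rfl fun j hj => ?_
  rw [mem_range] at hj
  have hz : (sc (2 * j)).1 = 0 := (sc_even j).1
  have hidx : 2 * k + 1 - (2 * j + 1) = 2 * (k - j) := by omega
  simp only [hz, mul_zero, map_zero, zero_mul, eval_zero, zero_add, sc_s_odd, hidx,
    eval_mul, eval_C]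


/-- Symmetry of Bernoulli polynomials: `B_n(1-X) = (-1)^n B_n(X)`. -/
lemma bernoulli_poly_symm (n : ℕ) :
    (Polynomial.bernoulli n).comp (1 - X) = C ((-1 : ℚ) ^ n) * Polynomial.bernoulli n := by
  induction n with
  | zero => simp
  | succ n ih =>
    have hd : derivative ((Polynomial.bernoulli (n + 1)).comp (1 - X))
        = derivative (C ((-1 : ℚ) ^ (n + 1)) * Polynomial.bernoulli (n + 1)) := by
      rw [derivative_comp_one_sub_X, Polynomial.derivative_bernoulli_add_one, derivative_C_mul,
        Polynomial.derivative_bernoulli_add_one, mul_comp, ih]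
      simp only [add_comp, natCast_comp, one_comp, pow_succ, mul_neg_one, map_neg]
      ring
    have hder : derivative ((Polynomial.bernoulli (n + 1)).comp (1 - X)
        - C ((-1 : ℚ) ^ (n + 1)) * Polynomial.bernoulli (n + 1)) = 0 := by
      rw [derivative_sub, hd, sub_self]
    have ha := Polynomial.eq_C_of_derivative_eq_zero hder
    have h0 : ((Polynomial.bernoulli (n + 1)).comp (1 - X)
        - C ((-1 : ℚ) ^ (n + 1)) * Polynomial.bernoulli (n + 1)).eval 0 = 0 := by
      simp only [eval_sub, eval_comp, eval_sub, eval_one, eval_X, sub_zero, eval_mul, eval_C,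
        Polynomial.bernoulli_eval_one, Polynomial.bernoulli_eval_zero]
      rw [_root_.bernoulli'_eq_bernoulli]
      ring
    have : (Polynomial.bernoulli (n + 1)).comp (1 - X)
        - C ((-1 : ℚ) ^ (n + 1)) * Polynomial.bernoulli (n + 1) = 0 := by
      rw [ha, Polynomial.coeff_zero_eq_eval_zero, h0, map_zero]
    linear_combination this

lemma bernoulli_eval_half_odd {n : ℕ} (hn : Odd n) :
    (Polynomial.bernoulli n).eval (1 / 2 : ℚ) = 0 := by
  have h := congrArg (Polynomial.eval (1 / 2 : ℚ)) (bernoulli_poly_symm n)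
  simp only [eval_comp, eval_sub, eval_one, eval_X, eval_mul, eval_C] at h
  rw [hn.neg_one_pow] at h
  norm_num at h
  linarith [h]

lemma bernoulli_odd_zero {n : ℕ} (hn : Odd n) (h1 : 1 < n) : _root_.bernoulli n = 0 := by
  rw [_root_.bernoulli_eq_bernoulli'_of_ne_one (by omega), _root_.bernoulli'_eq_zero_of_odd hn h1]

lemma sum_choose_two_pow (N : ℕ) :
    ∑ j ∈ range (N + 1), (N.choose j : ℚ) * 2 ^ j * _root_.bernoulli j
      = 2 ^ N * (Polynomial.bernoulli N).eval (1 / 2 : ℚ) := by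
  rw [Polynomial.bernoulli, eval_finset_sum, mul_sum]
  refine sum_congr rfl fun i hi => ?_
  rw [mem_range] at hi
  rw [eval_monomial]
  have h2 : (2 : ℚ) ^ N = 2 ^ i * 2 ^ (N - i) := by
    rw [← pow_add]
    congr 1
    omega
  rw [h2]
  have : ((1 : ℚ) / 2) ^ (N - i) = (2 ^ (N - i))⁻¹ := by
    rw [div_pow, one_pow, inv_eq_one_div]
  rw [this]
  have hne : (2 : ℚ) ^ (N - i) ≠ 0 := by positivity
  field_simp

/-- The key Bernoulli identity: for `k ≥ 1`,
`∑_{m=0}^{k} C(2k+1, 2m) (4^m - 2) B_{2m} = 0`. -/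
lemma key_bernoulli (k : ℕ) (hk : 1 ≤ k) :
    ∑ m ∈ range (k + 1), ((2 * k + 1).choose (2 * m) : ℚ) * (4 ^ m - 2)
      * _root_.bernoulli (2 * m) = 0 := by
  set N := 2 * k + 1 with hN
  have hodd : Odd N := ⟨k, by omega⟩
  have hsplit : ∑ j ∈ range (N + 1), (N.choose j : ℚ) * ((2 : ℚ) ^ j - 2) * _root_.bernoulli j
      = ∑ m ∈ range (k + 1),
          ((N.choose (2 * m) : ℚ) * (4 ^ m - 2) * _root_.bernoulli (2 * m)
            + (N.choose (2 * m + 1) : ℚ) * ((2 : ℚ) ^ (2 * m + 1) - 2)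
              * _root_.bernoulli (2 * m + 1)) := by
    have h : N + 1 = 2 * (k + 1) := by omega
    rw [h, sum_range_even_odd]
    refine sum_congr rfl fun m hm => ?_
    congr 2
    rw [pow_mul]
    norm_num
  have hoddzero : ∀ m ∈ range (k + 1),
      (N.choose (2 * m + 1) : ℚ) * ((2 : ℚ) ^ (2 * m + 1) - 2) * _root_.bernoulli (2 * m + 1)
        = 0 := by
    intro m _
    rcases Nat.eq_zero_or_pos m with hm0 | hm0
    · subst hm0; norm_num
    · rw [bernoulli_odd_zero ⟨m, by omega⟩ (by omega), mul_zero]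
  have h2 : ∑ j ∈ range (N + 1), (N.choose j : ℚ) * 2 ^ j * _root_.bernoulli j = 0 := by
    rw [sum_choose_two_pow, bernoulli_eval_half_odd hodd, mul_zero]
  have h3 : ∑ j ∈ range (N + 1), (N.choose j : ℚ) * _root_.bernoulli j = 0 := by
    rw [sum_range_succ, _root_.sum_bernoulli]
    have : N ≠ 1 := by omega
    simp only [this, if_false, zero_add, Nat.choose_self, Nat.cast_one, one_mul]
    exact bernoulli_odd_zero hodd (by omega)
  have hcomb : ∑ j ∈ range (N + 1), (N.choose j : ℚ) * ((2 : ℚ) ^ j - 2) * _root_.bernoulli j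
      = 0 := by
    have : ∀ j ∈ range (N + 1), (N.choose j : ℚ) * ((2 : ℚ) ^ j - 2) * _root_.bernoulli j
        = (N.choose j : ℚ) * 2 ^ j * _root_.bernoulli j
          - 2 * ((N.choose j : ℚ) * _root_.bernoulli j) := by
      intro j _
      ring
    rw [sum_congr rfl this, sum_sub_distrib, h2, ← mul_sum, h3]
    ring
  rw [hsplit, sum_add_distrib, sum_congr rfl hoddzero] at hcomb
  simpa using hcomb

theorem P_even_eq_sum_Q_bernoulli (n : ℕ) (x : ℚ) :
    (2 * n + 1 : ℚ) * (P (2 * n)).eval x =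
      (Q (2 * n + 1)).eval x +
        ∑ i ∈ Finset.range n,
          ((2 * n + 1).choose (2 * i + 2) : ℚ) * (-1) ^ (i + 2) * (4 ^ (i + 1) - 2) *
            _root_.bernoulli (2 * i + 2) * (Q (2 * n - 2 * i - 1)).eval x := by
  set a : ℕ → ℚ := fun m => ((2 * n + 1).choose (2 * m) : ℚ) * (-1) ^ (m + 1) * (4 ^ m - 2)
    * _root_.bernoulli (2 * m) with ha_def
  have ha0 : a 0 = 1 := by norm_num [ha_def]
  -- Step 1: RHS as a single sum over m ∈ range (n+1)
  have step1 : (Q (2 * n + 1)).eval x +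
        ∑ i ∈ Finset.range n,
          ((2 * n + 1).choose (2 * i + 2) : ℚ) * (-1) ^ (i + 2) * (4 ^ (i + 1) - 2) *
            _root_.bernoulli (2 * i + 2) * (Q (2 * n - 2 * i - 1)).eval x
      = ∑ m ∈ range (n + 1), a m * (Q (2 * (n - m) + 1)).eval x := by
    rw [sum_range_succ' (fun m => a m * (Q (2 * (n - m) + 1)).eval x) n]
    simp only [ha0, one_mul, Nat.sub_zero]
    rw [add_comm]
    congr 1
    refine sum_congr rfl fun i hi => ?_
    rw [mem_range] at hi
    have e1 : 2 * (i + 1) = 2 * i + 2 := by ring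
    have e2 : 2 * (n - (i + 1)) + 1 = 2 * n - 2 * i - 1 := by omega
    have e3 : i + 1 + 1 = i + 2 := by ring
    rw [ha_def]
    simp only [e1, e2, e3]
  rw [step1]
  -- Step 2: substitute Q_odd_eval
  have step2 : ∑ m ∈ range (n + 1), a m * (Q (2 * (n - m) + 1)).eval x
      = ∑ m ∈ range (n + 1), ∑ j ∈ range (n + 1 - m),
          a m * (((2 * (n - m) + 1).choose (2 * j + 1) : ℚ) * (-1) ^ j
            * (P (2 * (n - m - j))).eval x) := by
    refine sum_congr rfl fun m hm => ?_
    rw [mem_range] at hm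
    rw [Q_odd_eval (n - m) x, mul_sum]
    have e : n + 1 - m = n - m + 1 := by omega
    rw [e]
  rw [step2, sum_tri]
  -- Step 3: inner sums
  have hfirst : ∑ m ∈ range (0 + 1),
      a m * (((2 * (n - m) + 1).choose (2 * (0 - m) + 1) : ℚ) * (-1) ^ (0 - m)
        * (P (2 * (n - m - (0 - m)))).eval x) = (2 * n + 1 : ℚ) * (P (2 * n)).eval x := by
    rw [zero_add, sum_range_one]
    simp [ha0, Nat.choose_one_right]
  have hzero : ∀ l ∈ range (n + 1), l ≠ 0 → ∑ m ∈ range (l + 1),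
      a m * (((2 * (n - m) + 1).choose (2 * (l - m) + 1) : ℚ) * (-1) ^ (l - m)
        * (P (2 * (n - m - (l - m)))).eval x) = 0 := by
    intro l hl hlne
    rw [mem_range] at hl
    have hstep : ∀ m ∈ range (l + 1),
        a m * (((2 * (n - m) + 1).choose (2 * (l - m) + 1) : ℚ) * (-1) ^ (l - m)
          * (P (2 * (n - m - (l - m)))).eval x)
        = ((-1) ^ (l + 1) * ((2 * n + 1).choose (2 * l + 1) : ℚ) * (P (2 * (n - l))).eval x)
          * (((2 * l + 1).choose (2 * m) : ℚ) * (4 ^ m - 2) * _root_.bernoulli (2 * m)) := by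
      intro m hm
      rw [mem_range] at hm
      have hml : m ≤ l := by omega
      have hidx : n - m - (l - m) = n - l := by omega
      have hchoose : ((2 * n + 1).choose (2 * m) : ℚ) * ((2 * (n - m) + 1).choose (2 * (l - m) + 1) : ℚ)
          = ((2 * n + 1).choose (2 * l + 1) : ℚ) * ((2 * l + 1).choose (2 * m) : ℚ) := by
        have h := Nat.choose_mul (n := 2 * n + 1) (k := 2 * l + 1) (s := 2 * m)
          (by omega)
        have e1 : 2 * n + 1 - 2 * m = 2 * (n - m) + 1 := by omega
        have e2 : 2 * l + 1 - 2 * m = 2 * (l - m) + 1 := by omega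
        rw [e1, e2] at h
        exact_mod_cast congrArg (Nat.cast (R := ℚ)) h.symm
      have hsign : ((-1 : ℚ)) ^ (m + 1) * (-1) ^ (l - m) = (-1) ^ (l + 1) := by
        rw [← pow_add]
        congr 1
        omega
      rw [ha_def, hidx]
      simp only []
      calc ((2 * n + 1).choose (2 * m) : ℚ) * (-1) ^ (m + 1) * (4 ^ m - 2)
            * _root_.bernoulli (2 * m)
            * (((2 * (n - m) + 1).choose (2 * (l - m) + 1) : ℚ) * (-1) ^ (l - m)
              * (P (2 * (n - l))).eval x)
          = (((2 * n + 1).choose (2 * m) : ℚ) * ((2 * (n - m) + 1).choose (2 * (l - m) + 1) : ℚ))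
            * ((-1 : ℚ) ^ (m + 1) * (-1) ^ (l - m)) * (4 ^ m - 2) * _root_.bernoulli (2 * m)
            * (P (2 * (n - l))).eval x := by ring
        _ = _ := by rw [hchoose, hsign]; ring
    rw [sum_congr rfl hstep, ← mul_sum, key_bernoulli l (by omega), mul_zero]
  rw [Finset.sum_eq_single_of_mem 0 (mem_range.mpr (by omega)) (fun l hl hlne => hzero l hl hlne),
    hfirst]
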